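/- Every signal admitting a constant-amplitude Hankel–Toeplitz factorization lies in the constant-amplitude rank-constrained PSD Hankel–Toeplitz set: S_MF^C ⊆ S_HT^C. In particular, if 𝓗 X_{:,l} = Z^l (Z^l)^T and 𝓣 t = Z^l (Z^l)^H for all l, then for every l the 2n×2n block matrix [[𝓣 conj(t), 𝓗 conj(X_{:,l})],[𝓗 X_{:,l}, 𝓣 t]] equals W^l (W^l)^H with W^l = [conj(Z^l); Z^l] ∈ ℂ^{2n×K}, hence is positive semidefinite with rank at most K. -/

import Mathlib

open Matrix Complex BigOperators
open scoped ComplexOrder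

noncomputable section

/-- The Hankel operator `𝓗 : ℂ^N → ℂ^{n×n}`, `N = 2n-1` (0-indexed). -/
def hk (n : ℕ) (x : Fin (2*n-1) → ℂ) : Matrix (Fin n) (Fin n) ℂ :=
  Matrix.of fun j k => x ⟨j.1 + k.1, by have h1 := j.2; have h2 := k.2; omega⟩

/-- The Toeplitz operator `𝓣 : ℂ^N → ℂ^{n×n}`, `N = 2n-1` (0-indexed). -/
def tp (n : ℕ) (t : Fin (2*n-1) → ℂ) : Matrix (Fin n) (Fin n) ℂ :=
  Matrix.of fun j k => t ⟨n - 1 + j.1 - k.1, by have h1 := j.2; have h2 := k.2; omega⟩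

/-- The steering matrix `A(f) ∈ ℂ^{N×K}` with `A(f)_{jk} = e^{-i2π f_k (j-1)}` (1-indexed). -/
def Afull (n K : ℕ) (f : Fin K → ℝ) : Matrix (Fin (2*n-1)) (Fin K) ℂ :=
  Matrix.of fun j k => Complex.exp (Complex.I * Complex.ofReal (-(2 * Real.pi * f k * (j.1 : ℝ))))

/-- The matrix `A ∈ ℂ^{n×K}` formed by the first `n` rows of `A(f)`. -/
def An (n K : ℕ) (f : Fin K → ℝ) : Matrix (Fin n) (Fin K) ℂ :=
  Matrix.of fun j k => Afull n K f ⟨j.1, by have h1 := j.2; omega⟩ k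

/-- `S_0^C`: constant-amplitude multichannel signals `X = A(f) diag(b) Φ`. -/
def S0C (n K L : ℕ) : Set (Matrix (Fin (2*n-1)) (Fin L) ℂ) :=
  {X | ∃ (f : Fin K → ℝ) (b : Fin K → ℝ) (Φ : Matrix (Fin K) (Fin L) ℂ),
    (∀ k, f k ∈ Set.Ico (0:ℝ) 1) ∧ (∀ k, 0 < b k) ∧ (∀ k l, ‖Φ k l‖ = 1) ∧
    X = Afull n K f * Matrix.diagonal (fun k => (b k : ℂ)) * Φ}

/-- `S_HT^C`: the constant-amplitude rank-constrained PSD Hankel-Toeplitz set. -/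
def SHTC (n K L : ℕ) : Set (Matrix (Fin (2*n-1)) (Fin L) ℂ) :=
  {X | ∃ (t : Fin (2*n-1) → ℂ), ∀ l,
    (Matrix.fromBlocks (tp n (fun m => star (t m))) (hk n (fun m => star (X m l)))
       (hk n (fun m => X m l)) (tp n t)).PosSemidef ∧
    (Matrix.fromBlocks (tp n (fun m => star (t m))) (hk n (fun m => star (X m l)))
       (hk n (fun m => X m l)) (tp n t)).rank ≤ K}

/-- `S_MF^C`: the constant-amplitude Hankel-Toeplitz factorization set. -/
def SMFC (n K L : ℕ) : Set (Matrix (Fin (2*n-1)) (Fin L) ℂ) :=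
  {X | ∃ (t : Fin (2*n-1) → ℂ) (Z : Fin L → Matrix (Fin n) (Fin K) ℂ),
    ∀ l, hk n (fun m => X m l) = Z l * (Z l)ᵀ ∧ tp n t = Z l * (Z l)ᴴ}

/-- `S_MF^C ⊆ S_HT^C`; in particular, if `𝓗 X_{:,l} = Z^l (Z^l)^T` and
`𝓣 t = Z^l (Z^l)^H` for all `l`, then for every `l` the block matrix
`[[𝓣 conj(t), 𝓗 conj(X_{:,l})],[𝓗 X_{:,l}, 𝓣 t]]` equals `W^l (W^l)^H` with
`W^l = [conj(Z^l); Z^l]`, hence is PSD with rank at most `K`. -/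
theorem SMFC_subset_SHTC (n K L : ℕ) (hn : 1 ≤ n) (hK : 1 ≤ K) (hL : 1 ≤ L) :
    SMFC n K L ⊆ SHTC n K L ∧
    ∀ (X : Matrix (Fin (2*n-1)) (Fin L) ℂ) (t : Fin (2*n-1) → ℂ)
      (Z : Fin L → Matrix (Fin n) (Fin K) ℂ),
      (∀ l, hk n (fun m => X m l) = Z l * (Z l)ᵀ ∧ tp n t = Z l * (Z l)ᴴ) →
      ∀ l,
        Matrix.fromBlocks (tp n (fun m => star (t m))) (hk n (fun m => star (X m l)))
            (hk n (fun m => X m l)) (tp n t) =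
          (Matrix.of fun (i : Fin n ⊕ Fin n) (k : Fin K) =>
              Sum.elim (fun j => star (Z l j k)) (fun j => Z l j k) i) *
          (Matrix.of fun (i : Fin n ⊕ Fin n) (k : Fin K) =>
              Sum.elim (fun j => star (Z l j k)) (fun j => Z l j k) i)ᴴ ∧
        (Matrix.fromBlocks (tp n (fun m => star (t m))) (hk n (fun m => star (X m l)))
            (hk n (fun m => X m l)) (tp n t)).PosSemidef ∧
        (Matrix.fromBlocks (tp n (fun m => star (t m))) (hk n (fun m => star (X m l)))
            (hk n (fun m => X m l)) (tp n t)).rank ≤ K := by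
  have key : ∀ (X : Matrix (Fin (2*n-1)) (Fin L) ℂ) (t : Fin (2*n-1) → ℂ)
      (Z : Fin L → Matrix (Fin n) (Fin K) ℂ),
      (∀ l, hk n (fun m => X m l) = Z l * (Z l)ᵀ ∧ tp n t = Z l * (Z l)ᴴ) →
      ∀ l,
        Matrix.fromBlocks (tp n (fun m => star (t m))) (hk n (fun m => star (X m l)))
            (hk n (fun m => X m l)) (tp n t) =
          (Matrix.of fun (i : Fin n ⊕ Fin n) (k : Fin K) =>
              Sum.elim (fun j => star (Z l j k)) (fun j => Z l j k) i) *
          (Matrix.of fun (i : Fin n ⊕ Fin n) (k : Fin K) =>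
              Sum.elim (fun j => star (Z l j k)) (fun j => Z l j k) i)ᴴ := by
    intro X t Z h l
    obtain ⟨h1, h2⟩ := h l
    ext i j
    have e1 := fun a b => congrFun (congrFun h1 a) b
    have e2 := fun a b => congrFun (congrFun h2 a) b
    simp only [Matrix.mul_apply, Matrix.transpose_apply, Matrix.conjTranspose_apply] at e1 e2
    cases i <;> cases j <;>
      simp only [Matrix.fromBlocks_apply₁₁, Matrix.fromBlocks_apply₁₂,
        Matrix.fromBlocks_apply₂₁, Matrix.fromBlocks_apply₂₂,
        Matrix.mul_apply, Matrix.conjTranspose_apply, Matrix.of_apply, Sum.elim_inl,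
        Sum.elim_inr, star_star]
    · rename_i a b
      have : tp n (fun m => star (t m)) a b = star (tp n t a b) := rfl
      rw [this, e2 a b]
      simp [Finset.sum_comm, mul_comm]
    · rename_i a b
      have : hk n (fun m => star (X m l)) a b = star (hk n (fun m => X m l) a b) := rfl
      rw [this, e1 a b]
      simp
    · rename_i a b
      rw [e1 a b]
    · rename_i a b
      rw [e2 a b]
  refine ⟨?_, fun X t Z h l => ?_⟩
  · rintro X ⟨t, Z, h⟩
    refine ⟨t, fun l => ?_⟩
    rw [key X t Z h l]
    constructor
    · exact Matrix.posSemidef_self_mul_conjTranspose _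
    · calc Matrix.rank _ ≤ Matrix.rank (Matrix.of fun (i : Fin n ⊕ Fin n) (k : Fin K) =>
          Sum.elim (fun j => star (Z l j k)) (fun j => Z l j k) i) := Matrix.rank_mul_le_left _ _
        _ ≤ Fintype.card (Fin K) := Matrix.rank_le_card_width _
        _ = K := Fintype.card_fin K
  · refine ⟨key X t Z h l, ?_, ?_⟩
    · rw [key X t Z h l]; exact Matrix.posSemidef_self_mul_conjTranspose _
    · rw [key X t Z h l]
      calc Matrix.rank _ ≤ Matrix.rank (Matrix.of fun (i : Fin n ⊕ Fin n) (k : Fin K) =>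
          Sum.elim (fun j => star (Z l j k)) (fun j => Z l j k) i) := Matrix.rank_mul_le_left _ _
        _ ≤ Fintype.card (Fin K) := Matrix.rank_le_card_width _
        _ = K := Fintype.card_fin K
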